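/- Let u, v, w be integers and define f : ℤ → ℚ by f(k) = (u·k³)/6 − (v·k²)/4 + (w·k)/12 + 1, and assume f(k) ∈ ℤ for every integer k. If m is a positive integer such that m divides k·f(k) for every integer k, then 2u ≡ 6 (mod m) and v ≡ 4 (mod 2m). (In the geometric setting, u = D³, v = D²·K_X, w = D·(K_X² + c₂) and f(k) = χ(kD) for a divisor D on a smooth threefold X of arithmetic genus 0, by Hirzebruch–Riemann–Roch; the hypothesis holds when m is the Amitsur period of D.) -/
import Mathlib


/-- **Threefold case.**
Let `u, v, w` be integers and `f : ℤ → ℚ` given by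
`f(k) = u·k³/6 − v·k²/4 + w·k/12 + 1`, taking integer values on `ℤ`
(with integer value function `fI`).  If `m` is a positive integer dividing `k·f(k)`
for every integer `k`, then `2u ≡ 6 (mod m)` and `v ≡ 4 (mod 2m)`. -/
theorem threefold_congruences (u v w : ℤ) (fI : ℤ → ℤ)
    (hfI : ∀ k : ℤ, (fI k : ℚ) =
      (u : ℚ) * k ^ 3 / 6 - (v : ℚ) * k ^ 2 / 4 + (w : ℚ) * k / 12 + 1)
    (m : ℤ) (hm : 0 < m) (hdvd : ∀ k : ℤ, m ∣ k * fI k) :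
    2 * u ≡ 6 [ZMOD m] ∧ v ≡ 4 [ZMOD 2 * m] := by
  have e1 : (12 : ℤ) * fI 1 = 2*u - 3*v + w + 12 := by
    have h := hfI 1
    have : (12 : ℚ) * (fI 1 : ℤ) = 2*(u:ℚ) - 3*v + w + 12 := by
      rw [h]; push_cast; ring
    exact_mod_cast this
  have e2 : (12 : ℤ) * fI (-1) = -2*u - 3*v - w + 12 := by
    have h := hfI (-1)
    have : (12 : ℚ) * (fI (-1) : ℤ) = -2*(u:ℚ) - 3*v - w + 12 := by
      rw [h]; push_cast; ring
    exact_mod_cast this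
  have e3 : (12 : ℤ) * fI 2 = 16*u - 12*v + 2*w + 12 := by
    have h := hfI 2
    have : (12 : ℚ) * (fI 2 : ℤ) = 16*(u:ℚ) - 12*v + 2*w + 12 := by
      rw [h]; push_cast; ring
    exact_mod_cast this
  have h1 : m ∣ fI 1 := by have := hdvd 1; simpa using this
  have h2 : m ∣ fI (-1) := by
    have := hdvd (-1)
    rw [neg_one_mul] at this
    exact (dvd_neg.mp this)
  have h3 : m ∣ 2 * fI 2 := by have := hdvd 2; simpa using this
  constructor
  · rw [Int.ModEq]
    have key : (6 : ℤ) - 2*u = 6 * fI 1 + 2 * fI (-1) - 2 * fI 2 := by linarith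
    have hd : m ∣ 6 - 2*u := by
      rw [key]
      exact dvd_sub (dvd_add (Dvd.dvd.mul_left h1 6) (Dvd.dvd.mul_left h2 2)) h3
    exact (Int.modEq_iff_dvd.mpr hd).symm.symm
  · have key : (4 : ℤ) - v = 2 * (fI 1 + fI (-1)) := by linarith
    have hd : 2 * m ∣ 4 - v := by
      rw [key]
      exact mul_dvd_mul_left 2 (dvd_add h1 h2)
    exact Int.modEq_iff_dvd.mpr hd
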